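/- Let μ_n, μ be probability measures on ℝ whose moment generating functions M_n(θ) := ∫e^{θx}dμ_n(x) and M(θ) := ∫e^{θx}dμ(x) are finite for all real θ, and suppose M_n(θ) → M(θ) for every θ ∈ ℝ. Then for every natural number k, the k-th moments converge: ∫x^k dμ_n(x) → ∫x^k dμ(x). -/

import Mathlib

open MeasureTheory Filter Finset

private lemma my_abs_exp_sub_one_le (t : ℝ) : |Real.exp t - 1| ≤ |t| * Real.exp |t| := by
  rcases le_or_gt 0 t with ht | ht
  · rw [abs_of_nonneg (by linarith [Real.one_le_exp ht]), abs_of_nonneg ht]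
    have h1 : 1 - t ≤ Real.exp (-t) := Real.one_sub_le_exp_neg t
    have h2 : Real.exp (-t) * Real.exp t = 1 := by rw [← Real.exp_add]; simp
    nlinarith [Real.exp_pos t]
  · have h1 : t + 1 ≤ Real.exp t := Real.add_one_le_exp t
    have h2 : Real.exp t ≤ 1 := by
      rw [show (1:ℝ) = Real.exp 0 by simp]; exact Real.exp_le_exp.2 ht.le
    rw [abs_of_nonpos (by linarith), abs_of_neg ht]
    nlinarith [Real.one_le_exp (le_of_lt (neg_pos.2 ht) : (0:ℝ) ≤ -t)]

private lemma my_abs_exp_sub_one_sub_le (t : ℝ) :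
    |Real.exp t - 1 - t| ≤ t ^ 2 * Real.exp |t| := by
  have hid : Real.exp t - 1 - t = ∫ s in (0:ℝ)..t, (Real.exp s - 1) := by
    rw [intervalIntegral.integral_sub (Real.continuous_exp.intervalIntegrable _ _)
      (intervalIntegrable_const), integral_exp, intervalIntegral.integral_const]
    simp only [Real.exp_zero, smul_eq_mul, mul_one, sub_zero]
  rw [hid]
  have hb : ∀ s ∈ Set.uIoc (0:ℝ) t, ‖Real.exp s - 1‖ ≤ |t| * Real.exp |t| := by
    intro s hs
    have hst : |s| ≤ |t| := by
      rcases le_or_gt 0 t with ht | ht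
      · rw [Set.uIoc_of_le ht] at hs
        rw [abs_of_pos hs.1, abs_of_nonneg ht]; exact hs.2
      · rw [Set.uIoc_of_ge ht.le] at hs
        rw [abs_of_nonpos hs.2, abs_of_neg ht]; linarith [hs.1]
    calc ‖Real.exp s - 1‖ ≤ |s| * Real.exp |s| := my_abs_exp_sub_one_le s
      _ ≤ |t| * Real.exp |t| := by
          exact mul_le_mul hst (Real.exp_le_exp.2 hst) (Real.exp_pos _).le (abs_nonneg _)
  calc ‖∫ s in (0:ℝ)..t, (Real.exp s - 1)‖ ≤ |t| * Real.exp |t| * |t - 0| :=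
        intervalIntegral.norm_integral_le_of_norm_le_const hb
    _ = t ^ 2 * Real.exp |t| := by
        rw [sub_zero, show |t| * Real.exp |t| * |t| = |t| ^ 2 * Real.exp |t| by ring, sq_abs]

private lemma my_abs_pow_sub_pow (a b : ℝ) (k : ℕ) :
    |a ^ k - b ^ k| ≤ k * max |a| |b| ^ (k - 1) * |a - b| := by
  set M := max |a| |b| with hM
  have hM0 : 0 ≤ M := le_trans (abs_nonneg a) (le_max_left _ _)
  rw [← geom_sum₂_mul, abs_mul]
  have hsum : |∑ i ∈ range k, a ^ i * b ^ (k - 1 - i)| ≤ k * M ^ (k - 1) := by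
    calc |∑ i ∈ range k, a ^ i * b ^ (k - 1 - i)|
        ≤ ∑ i ∈ range k, |a ^ i * b ^ (k - 1 - i)| := Finset.abs_sum_le_sum_abs _ _
      _ ≤ ∑ _i ∈ range k, M ^ (k - 1) := by
          refine Finset.sum_le_sum fun i hi => ?_
          rw [abs_mul, abs_pow, abs_pow]
          have hi' : i < k := Finset.mem_range.1 hi
          calc |a| ^ i * |b| ^ (k - 1 - i) ≤ M ^ i * M ^ (k - 1 - i) := by
                exact mul_le_mul (pow_le_pow_left₀ (abs_nonneg _) (le_max_left _ _) _)
                  (pow_le_pow_left₀ (abs_nonneg _) (le_max_right _ _) _)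
                  (pow_nonneg (abs_nonneg _) _) (pow_nonneg hM0 _)
            _ = M ^ (k - 1) := by rw [← pow_add]; congr 1; omega
      _ = k * M ^ (k - 1) := by rw [Finset.sum_const, Finset.card_range, nsmul_eq_mul]
  exact mul_le_mul_of_nonneg_right hsum (abs_nonneg _)

private lemma my_exp_abs_le (x : ℝ) : Real.exp |x| ≤ Real.exp x + Real.exp (-x) := by
  rcases abs_cases x with ⟨h1, _⟩ | ⟨h1, _⟩ <;> rw [h1] <;>
    linarith [Real.exp_pos x, Real.exp_pos (-x)]

/-- the key pointwise bound -/
private lemma my_key_bound (k : ℕ) {h : ℝ} (h0 : 0 < h) (h1 : h ≤ 1) (x : ℝ) :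
    |((Real.exp (h * x) - 1) / h) ^ k - x ^ k| ≤
      h * (k * (k + 1).factorial) *
        (Real.exp (((k : ℝ) + 1) * x) + Real.exp (-((k : ℝ) + 1) * x)) := by
  rcases Nat.eq_zero_or_pos k with rfl | hk
  · simp [abs_nonneg]
  set a : ℝ := (Real.exp (h * x) - 1) / h with ha
  have hhx : |h * x| = h * |x| := by rw [abs_mul, abs_of_pos h0]
  have hexphx : Real.exp (h * |x|) ≤ Real.exp |x| :=
    Real.exp_le_exp.2 (by nlinarith [abs_nonneg x])
  have haM : |a| ≤ |x| * Real.exp |x| := by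
    rw [ha, abs_div, abs_of_pos h0, div_le_iff₀ h0]
    calc |Real.exp (h * x) - 1| ≤ |h * x| * Real.exp |h * x| := my_abs_exp_sub_one_le _
      _ = (h * |x|) * Real.exp (h * |x|) := by rw [hhx]
      _ ≤ (h * |x|) * Real.exp |x| := mul_le_mul_of_nonneg_left hexphx (by positivity)
      _ = |x| * Real.exp |x| * h := by ring
  have hbM : |x| ≤ |x| * Real.exp |x| := le_mul_of_one_le_right (abs_nonneg x)
    (Real.one_le_exp (abs_nonneg x))
  have hmax : max |a| |x| ≤ |x| * Real.exp |x| := max_le haM hbM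
  have hab : |a - x| ≤ h * x ^ 2 * Real.exp |x| := by
    have : a - x = (Real.exp (h * x) - 1 - h * x) / h := by
      rw [ha]; field_simp
    rw [this, abs_div, abs_of_pos h0, div_le_iff₀ h0]
    calc |Real.exp (h * x) - 1 - h * x| ≤ (h * x) ^ 2 * Real.exp |h * x| :=
          my_abs_exp_sub_one_sub_le _
      _ = (h * x) ^ 2 * Real.exp (h * |x|) := by rw [hhx]
      _ ≤ (h * x) ^ 2 * Real.exp |x| := mul_le_mul_of_nonneg_left hexphx (by positivity)
      _ = h * x ^ 2 * Real.exp |x| * h := by ring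
  have hMnn : (0:ℝ) ≤ |x| * Real.exp |x| := by positivity
  have step1 : |a ^ k - x ^ k| ≤ k * (|x| * Real.exp |x|) ^ (k - 1) * (h * x ^ 2 * Real.exp |x|) := by
    calc |a ^ k - x ^ k| ≤ k * max |a| |x| ^ (k - 1) * |a - x| := my_abs_pow_sub_pow a x k
      _ ≤ k * (|x| * Real.exp |x|) ^ (k - 1) * (h * x ^ 2 * Real.exp |x|) := by
          refine mul_le_mul (mul_le_mul_of_nonneg_left
            (pow_le_pow_left₀ (le_trans (abs_nonneg a) (le_max_left _ _)) hmax _)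
            (Nat.cast_nonneg k)) hab (abs_nonneg _) (by positivity)
  have step2 : k * (|x| * Real.exp |x|) ^ (k - 1) * (h * x ^ 2 * Real.exp |x|)
      = h * k * (|x| ^ (k + 1) * Real.exp ((k : ℝ) * |x|)) := by
    rw [mul_pow, ← Real.exp_nat_mul]
    have hxk : |x| ^ (k - 1) * x ^ 2 = |x| ^ (k + 1) := by
      rw [show x ^ 2 = |x| ^ 2 from (sq_abs x).symm, ← pow_add]
      congr 1; omega
    have hek : Real.exp (((k - 1 : ℕ) : ℝ) * |x|) * Real.exp |x| = Real.exp ((k : ℝ) * |x|) := by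
      rw [← Real.exp_add]; congr 1
      have : ((k - 1 : ℕ) : ℝ) = (k : ℝ) - 1 := by
        rw [Nat.cast_sub hk]; simp
      rw [this]; ring
    calc (k:ℝ) * (|x| ^ (k-1) * Real.exp (((k-1:ℕ):ℝ) * |x|)) * (h * x ^ 2 * Real.exp |x|)
        = h * k * ((|x| ^ (k-1) * x ^ 2) * (Real.exp (((k-1:ℕ):ℝ) * |x|) * Real.exp |x|)) := by
          ring
      _ = h * k * (|x| ^ (k + 1) * Real.exp ((k : ℝ) * |x|)) := by rw [hxk, hek]
  have step3 : |x| ^ (k + 1) * Real.exp ((k : ℝ) * |x|)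
      ≤ (k + 1).factorial * (Real.exp (((k : ℝ) + 1) * x) + Real.exp (-((k : ℝ) + 1) * x)) := by
    have hp : |x| ^ (k + 1) ≤ (k + 1).factorial * Real.exp |x| := by
      have := Real.pow_div_factorial_le_exp (x := |x|) (abs_nonneg x) (k + 1)
      rw [div_le_iff₀ (by positivity)] at this
      linarith [this]
    calc |x| ^ (k + 1) * Real.exp ((k : ℝ) * |x|)
        ≤ ((k + 1).factorial * Real.exp |x|) * Real.exp ((k : ℝ) * |x|) :=
          mul_le_mul_of_nonneg_right hp (Real.exp_pos _).le
      _ = (k + 1).factorial * Real.exp (((k : ℝ) + 1) * |x|) := by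
          rw [mul_assoc, ← Real.exp_add]; ring_nf
      _ ≤ (k + 1).factorial * (Real.exp (((k : ℝ) + 1) * x) + Real.exp (-((k : ℝ) + 1) * x)) := by
          refine mul_le_mul_of_nonneg_left ?_ (by positivity)
          have h1 : ((k : ℝ) + 1) * |x| = |((k : ℝ) + 1) * x| := by
            rw [abs_mul, abs_of_pos (by positivity : (0:ℝ) < (k:ℝ)+1)]
          rw [h1, show -((k : ℝ) + 1) * x = -(((k:ℝ)+1) * x) by ring]
          exact my_exp_abs_le _
  calc |a ^ k - x ^ k| ≤ h * k * (|x| ^ (k + 1) * Real.exp ((k : ℝ) * |x|)) := by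
        rw [← step2]; exact step1
    _ ≤ h * k * ((k + 1).factorial *
          (Real.exp (((k : ℝ) + 1) * x) + Real.exp (-((k : ℝ) + 1) * x))) := by
        refine mul_le_mul_of_nonneg_left step3 (by positivity)
    _ = h * (k * (k + 1).factorial) *
          (Real.exp (((k : ℝ) + 1) * x) + Real.exp (-((k : ℝ) + 1) * x)) := by
        push_cast; ring

private lemma my_expand (k : ℕ) {h : ℝ} (hh : h ≠ 0) (x : ℝ) :
    ((Real.exp (h * x) - 1) / h) ^ k
      = ∑ j ∈ range (k + 1),
          ((-1 : ℝ) ^ (j + k) * k.choose j / h ^ k) * Real.exp ((j * h) * x) := by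
  rw [div_pow, sub_pow, Finset.sum_div]
  refine Finset.sum_congr rfl fun j hj => ?_
  have he : Real.exp (h * x) ^ j = Real.exp ((j * h) * x) := by
    rw [← Real.exp_nat_mul]; ring_nf
  rw [he, one_pow]
  ring

private lemma my_integrable_g (ν : Measure ℝ) [IsProbabilityMeasure ν]
    (hi : ∀ θ : ℝ, Integrable (fun x => Real.exp (θ * x)) ν) (k : ℕ) {h : ℝ} (hh : h ≠ 0) :
    Integrable (fun x => ((Real.exp (h * x) - 1) / h) ^ k) ν := by
  have : Integrable (fun x => ∑ j ∈ range (k + 1),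
      ((-1 : ℝ) ^ (j + k) * k.choose j / h ^ k) * Real.exp ((j * h) * x)) ν :=
    integrable_finset_sum _ fun j _ => (hi (j * h)).const_mul _
  exact this.congr (ae_of_all _ fun x => (my_expand k hh x).symm)

private lemma my_integral_g (ν : Measure ℝ) [IsProbabilityMeasure ν]
    (hi : ∀ θ : ℝ, Integrable (fun x => Real.exp (θ * x)) ν) (k : ℕ) {h : ℝ} (hh : h ≠ 0) :
    ∫ x, ((Real.exp (h * x) - 1) / h) ^ k ∂ν
      = ∑ j ∈ range (k + 1),
          ((-1 : ℝ) ^ (j + k) * k.choose j / h ^ k) * ∫ x, Real.exp ((j * h) * x) ∂ν := by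
  rw [integral_congr_ae (ae_of_all _ fun x => my_expand k hh x),
    integral_finset_sum (range (k + 1))
      (f := fun j x => ((-1 : ℝ) ^ (j + k) * k.choose j / h ^ k) * Real.exp ((j * h) * x))
      (fun j _ => (hi ((j : ℝ) * h)).const_mul _)]
  exact Finset.sum_congr rfl fun j _ => integral_const_mul _ _

private lemma my_integrable_pow (ν : Measure ℝ) [IsProbabilityMeasure ν]
    (hi : ∀ θ : ℝ, Integrable (fun x => Real.exp (θ * x)) ν) (k : ℕ) :
    Integrable (fun x : ℝ => x ^ k) ν := by
  have hg : Integrable (fun x => (k.factorial : ℝ) *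
      (Real.exp (1 * x) + Real.exp (-1 * x))) ν := ((hi 1).add (hi (-1))).const_mul _
  refine hg.mono' ((measurable_id.pow_const k).aestronglyMeasurable) (ae_of_all _ fun x => ?_)
  rw [Real.norm_eq_abs, abs_pow]
  have h1 : |x| ^ k ≤ k.factorial * Real.exp |x| := by
    have := Real.pow_div_factorial_le_exp (x := |x|) (abs_nonneg x) k
    rw [div_le_iff₀ (by positivity)] at this
    linarith
  have h2 : Real.exp |x| ≤ Real.exp (1 * x) + Real.exp (-1 * x) := by
    rw [one_mul, show (-1 : ℝ) * x = -x by ring]; exact my_exp_abs_le x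
  calc |x| ^ k ≤ k.factorial * Real.exp |x| := h1
    _ ≤ (k.factorial : ℝ) * (Real.exp (1 * x) + Real.exp (-1 * x)) :=
        mul_le_mul_of_nonneg_left h2 (by positivity)

private lemma my_integral_diff_bound (ν : Measure ℝ) [IsProbabilityMeasure ν]
    (hi : ∀ θ : ℝ, Integrable (fun x => Real.exp (θ * x)) ν) (k : ℕ) {h : ℝ}
    (h0 : 0 < h) (h1 : h ≤ 1) :
    |(∫ x, ((Real.exp (h * x) - 1) / h) ^ k ∂ν) - ∫ x, x ^ k ∂ν|
      ≤ h * (k * (k + 1).factorial) *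
          ∫ x, (Real.exp (((k : ℝ) + 1) * x) + Real.exp (-((k : ℝ) + 1) * x)) ∂ν := by
  have hig := my_integrable_g ν hi k h0.ne'
  have hip := my_integrable_pow ν hi k
  have hie : Integrable (fun x => Real.exp (((k : ℝ) + 1) * x)
      + Real.exp (-((k : ℝ) + 1) * x)) ν := (hi _).add (hi _)
  rw [← integral_sub hig hip]
  calc |∫ x, (((Real.exp (h * x) - 1) / h) ^ k - x ^ k) ∂ν|
      ≤ ∫ x, |((Real.exp (h * x) - 1) / h) ^ k - x ^ k| ∂ν := by
        simpa [Real.norm_eq_abs] using norm_integral_le_integral_norm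
          (fun x => ((Real.exp (h * x) - 1) / h) ^ k - x ^ k) (μ := ν)
    _ ≤ ∫ x, h * (k * (k + 1).factorial) *
          (Real.exp (((k : ℝ) + 1) * x) + Real.exp (-((k : ℝ) + 1) * x)) ∂ν := by
        refine integral_mono ((hig.sub hip).abs) (hie.const_mul _)
          (fun x => my_key_bound k h0 h1 x)
    _ = h * (k * (k + 1).factorial) *
          ∫ x, (Real.exp (((k : ℝ) + 1) * x) + Real.exp (-((k : ℝ) + 1) * x)) ∂ν :=
        integral_const_mul _ _

theorem moments_converge_of_mgf_converges
    (μn : ℕ → Measure ℝ) (μ : Measure ℝ)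
    [∀ n, IsProbabilityMeasure (μn n)] [IsProbabilityMeasure μ]
    (hint_n : ∀ θ : ℝ, ∀ n, Integrable (fun x => Real.exp (θ * x)) (μn n))
    (hint : ∀ θ : ℝ, Integrable (fun x => Real.exp (θ * x)) μ)
    (hmgf : ∀ θ : ℝ,
      Tendsto (fun n => ∫ x, Real.exp (θ * x) ∂(μn n)) atTop
        (nhds (∫ x, Real.exp (θ * x) ∂μ)))
    (k : ℕ) :
    Tendsto (fun n => ∫ x, x ^ k ∂(μn n)) atTop (nhds (∫ x, x ^ k ∂μ)) := by
  rcases Nat.eq_zero_or_pos k with rfl | hk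
  · simp only [pow_zero, integral_const, measure_univ, ENNReal.toReal_one, probReal_univ, smul_eq_mul, one_mul]
    exact tendsto_const_nhds
  set θ₀ : ℝ := (k : ℝ) + 1 with hθ₀
  set K : ℝ := k * (k + 1).factorial with hKdef
  have hK0 : 0 < K := by
    rw [hKdef]; positivity
  set C : ℝ := ∫ x, (Real.exp (θ₀ * x) + Real.exp (-θ₀ * x)) ∂μ with hCdef
  set Cn : ℕ → ℝ := fun n => ∫ x, (Real.exp (θ₀ * x) + Real.exp (-θ₀ * x)) ∂(μn n) with hCndef
  have hC0 : 0 ≤ C := integral_nonneg fun x => by positivity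
  have hCn : Tendsto Cn atTop (nhds C) := by
    have h1 := (hmgf θ₀).add (hmgf (-θ₀))
    have he : ∀ n, Cn n = (∫ x, Real.exp (θ₀ * x) ∂(μn n)) + ∫ x, Real.exp (-θ₀ * x) ∂(μn n) :=
      fun n => integral_add (hint_n θ₀ n) (hint_n (-θ₀) n)
    have he' : C = (∫ x, Real.exp (θ₀ * x) ∂μ) + ∫ x, Real.exp (-θ₀ * x) ∂μ :=
      integral_add (hint θ₀) (hint (-θ₀))
    rw [he']
    exact Tendsto.congr (fun n => (he n).symm) h1
  rw [Metric.tendsto_atTop]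
  intro ε hε
  set δ : ℝ := min 1 (ε / (6 * K * (C + 1))) with hδdef
  have hδ0 : 0 < δ := lt_min one_pos (by positivity)
  have hδ1 : δ ≤ 1 := min_le_left _ _
  have hδ2 : δ * K * (C + 1) ≤ ε / 6 := by
    have h := min_le_right 1 (ε / (6 * K * (C + 1)))
    calc δ * K * (C + 1) ≤ (ε / (6 * K * (C + 1))) * K * (C + 1) := by
          refine mul_le_mul_of_nonneg_right (mul_le_mul_of_nonneg_right h hK0.le) (by linarith)
      _ = ε / 6 := by field_simp
  -- convergence of the finite-difference integrals
  have hF : Tendsto (fun n => ∫ x, ((Real.exp (δ * x) - 1) / δ) ^ k ∂(μn n)) atTop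
      (nhds (∫ x, ((Real.exp (δ * x) - 1) / δ) ^ k ∂μ)) := by
    rw [my_integral_g μ hint k hδ0.ne']
    refine Tendsto.congr
      (fun n => (my_integral_g (μn n) (fun θ => hint_n θ n) k hδ0.ne').symm) ?_
    exact tendsto_finset_sum _ fun j _ => ((hmgf ((j : ℝ) * δ)).const_mul _)
  obtain ⟨N1, hN1⟩ := Metric.tendsto_atTop.1 hF (ε / 3) (by positivity)
  have hCnev : ∀ᶠ n in atTop, Cn n < C + 1 := hCn.eventually_lt_const (by linarith)
  obtain ⟨N2, hN2⟩ := eventually_atTop.1 hCnev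
  refine ⟨max N1 N2, fun n hn => ?_⟩
  have hn1 : N1 ≤ n := le_trans (le_max_left _ _) hn
  have hn2 : N2 ≤ n := le_trans (le_max_right _ _) hn
  have hb1 : |(∫ x, ((Real.exp (δ * x) - 1) / δ) ^ k ∂(μn n)) - ∫ x, x ^ k ∂(μn n)|
      ≤ δ * K * Cn n := my_integral_diff_bound (μn n) (fun θ => hint_n θ n) k hδ0 hδ1
  have hb2 : |(∫ x, ((Real.exp (δ * x) - 1) / δ) ^ k ∂μ) - ∫ x, x ^ k ∂μ|
      ≤ δ * K * C := my_integral_diff_bound μ hint k hδ0 hδ1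
  have hb3 := hN1 n hn1
  rw [Real.dist_eq] at hb3 ⊢
  have hCnb : Cn n ≤ C + 1 := le_of_lt (hN2 n hn2)
  have hδK : 0 ≤ δ * K := by positivity
  have h1 : δ * K * Cn n ≤ ε / 6 :=
    le_trans (mul_le_mul_of_nonneg_left hCnb hδK) hδ2
  have h2 : δ * K * C ≤ ε / 6 := by
    refine le_trans ?_ hδ2
    exact mul_le_mul_of_nonneg_left (by linarith) hδK
  have tri : |(∫ x, x ^ k ∂(μn n)) - ∫ x, x ^ k ∂μ|
      ≤ |(∫ x, x ^ k ∂(μn n)) - ∫ x, ((Real.exp (δ * x) - 1) / δ) ^ k ∂(μn n)|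
        + |(∫ x, ((Real.exp (δ * x) - 1) / δ) ^ k ∂(μn n))
            - ∫ x, ((Real.exp (δ * x) - 1) / δ) ^ k ∂μ|
        + |(∫ x, ((Real.exp (δ * x) - 1) / δ) ^ k ∂μ) - ∫ x, x ^ k ∂μ| := by
    have := abs_sub_le (∫ x, x ^ k ∂(μn n))
      (∫ x, ((Real.exp (δ * x) - 1) / δ) ^ k ∂(μn n)) (∫ x, x ^ k ∂μ)
    have := abs_sub_le (∫ x, ((Real.exp (δ * x) - 1) / δ) ^ k ∂(μn n))
      (∫ x, ((Real.exp (δ * x) - 1) / δ) ^ k ∂μ) (∫ x, x ^ k ∂μ)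
    linarith
  rw [abs_sub_comm] at hb1
  linarith
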